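/- Let r ≥ 1, let A₁,…,A_r be symmetric positive definite p×p real matrices, let q₁,…,q_r ≥ 0 with Σ_{i=1}^r q_i = 1, let D be a symmetric positive semidefinite p×p real matrix, and let Φ be a real-valued function on symmetric positive semidefinite p×p matrices that is isotonic with respect to the Loewner order (i.e. Φ(M₁) ≥ Φ(M₂) whenever M₁ − M₂ is positive semidefinite). Then Φ( ((Σ_{i=1}^r q_i·A_i)⁻¹ + D)⁻¹ ) ≥ Φ( Σ_{i=1}^r q_i·(A_i⁻¹ + D)⁻¹ ). (In design language: replacing a population design ζ = {(ξ_i, q_i)} by the single individual design ξ = Σ_i q_i ξ_i, used for all statistical units, does not decrease any isotonic optimality criterion, for information matrices of the form M(ξ) = (M̃(ξ)⁻¹ + D)⁻¹ with M̃ linear in ξ.) -/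

import Mathlib

open Matrix Real Finset

section Aux

variable {p : ℕ}

lemma herm_dot_comm {E : Matrix (Fin p) (Fin p) ℝ} (hE : E.IsHermitian)
    (u v : Fin p → ℝ) : u ⬝ᵥ E *ᵥ v = v ⬝ᵥ E *ᵥ u := by
  have hEt : Eᵀ = E := by
    have := hE
    rwa [Matrix.IsHermitian, conjTranspose_eq_transpose_of_trivial] at this
  rw [Matrix.dotProduct_mulVec, ← Matrix.mulVec_transpose, hEt, dotProduct_comm]

lemma polar {E : Matrix (Fin p) (Fin p) ℝ} (hE : E.PosSemidef)
    (u v : Fin p → ℝ) : 2 * (u ⬝ᵥ E *ᵥ v) ≤ u ⬝ᵥ E *ᵥ u + v ⬝ᵥ E *ᵥ v := by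
  have h := (posSemidef_iff_dotProduct_mulVec.1 hE).2 (u - v)
  rw [star_trivial, Matrix.mulVec_sub, sub_dotProduct, dotProduct_sub,
    dotProduct_sub] at h
  have hc : v ⬝ᵥ E *ᵥ u = u ⬝ᵥ E *ᵥ v := herm_dot_comm hE.1 v u
  linarith

lemma psd_smul {M : Matrix (Fin p) (Fin p) ℝ} (hM : M.PosSemidef) {c : ℝ} (hc : 0 ≤ c) :
    (c • M).PosSemidef := by
  refine posSemidef_iff_dotProduct_mulVec.2 ⟨?_, fun x => ?_⟩
  · have : (c • M)ᴴ = c • Mᴴ := by simp [Matrix.conjTranspose_smul]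
    rw [Matrix.IsHermitian, this, hM.1]
  · rw [Matrix.smul_mulVec, dotProduct_smul]
    exact mul_nonneg hc (by simpa using (posSemidef_iff_dotProduct_mulVec.1 hM).2 x)

lemma psd_sum {r : ℕ} (S : Fin r → Matrix (Fin p) (Fin p) ℝ)
    (hS : ∀ i, (S i).PosSemidef) : (∑ i, S i).PosSemidef := by
  classical
  exact Finset.sum_induction S _ (fun a b ha hb => ha.add hb) Matrix.PosSemidef.zero
    (fun i _ => hS i)

lemma dotProduct_sum' {p r : ℕ} (v : Fin p → ℝ) (f : Fin r → Fin p → ℝ) :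
    v ⬝ᵥ (∑ i, f i) = ∑ i, v ⬝ᵥ f i := by
  simp only [dotProduct, Finset.sum_apply, Finset.mul_sum]
  exact Finset.sum_comm

lemma sum_dotProduct' {p r : ℕ} (f : Fin r → Fin p → ℝ) (v : Fin p → ℝ) :
    (∑ i, f i) ⬝ᵥ v = ∑ i, f i ⬝ᵥ v := by
  simp only [dotProduct, Finset.sum_apply, Finset.sum_mul]
  exact Finset.sum_comm

lemma sum_mulVec' {p r : ℕ} (M : Fin r → Matrix (Fin p) (Fin p) ℝ) (v : Fin p → ℝ) :
    (∑ i, M i) *ᵥ v = ∑ i, M i *ᵥ v := by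
  funext k
  simp only [Matrix.mulVec, dotProduct, Matrix.sum_apply, Finset.sum_apply, Finset.sum_mul]
  exact Finset.sum_comm

end Aux

theorem isotonic_criterion_single_design
    (p r : ℕ) (hr : 1 ≤ r)
    (A : Fin r → Matrix (Fin p) (Fin p) ℝ) (hA : ∀ i, (A i).PosDef)
    (q : Fin r → ℝ) (hq : ∀ i, 0 ≤ q i) (hqs : ∑ i, q i = 1)
    (D : Matrix (Fin p) (Fin p) ℝ) (hD : D.PosSemidef)
    (Φ : Matrix (Fin p) (Fin p) ℝ → ℝ)
    (hΦ : ∀ M₁ M₂ : Matrix (Fin p) (Fin p) ℝ, M₁.PosSemidef → M₂.PosSemidef →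
      (M₁ - M₂).PosSemidef → Φ M₂ ≤ Φ M₁) :
    Φ (∑ i, q i • ((A i)⁻¹ + D)⁻¹) ≤ Φ (((∑ i, q i • A i)⁻¹ + D)⁻¹) := by
  classical
  -- notation
  set Abar : Matrix (Fin p) (Fin p) ℝ := ∑ i, q i • A i with hAbar
  -- some q j is positive
  obtain ⟨j, hj⟩ : ∃ j, 0 < q j := by
    by_contra h
    push_neg at h
    have : ∀ i, q i = 0 := fun i => le_antisymm (h i) (hq i)
    simp [this] at hqs
  -- Abar is positive definite
  have hAbarPD : Abar.PosDef := by
    have h1 : Abar = q j • A j + ∑ i ∈ Finset.univ.erase j, q i • A i := by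
      rw [hAbar, ← Finset.add_sum_erase _ _ (Finset.mem_univ j)]
    rw [h1]
    have hsmul : (q j • A j).PosDef := by
      refine posDef_iff_dotProduct_mulVec.2 ⟨?_, fun x hx => ?_⟩
      · have : (q j • A j)ᴴ = q j • (A j)ᴴ := by simp [Matrix.conjTranspose_smul]
        rw [Matrix.IsHermitian, this, (hA j).1]
      · rw [Matrix.smul_mulVec, dotProduct_smul]
        exact mul_pos hj (by simpa using (posDef_iff_dotProduct_mulVec.1 (hA j)).2 hx)
    refine hsmul.add_posSemidef ?_
    exact Finset.sum_induction _ _ (fun a b ha hb => ha.add hb) Matrix.PosSemidef.zero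
      (fun i _ => psd_smul (hA i).posSemidef (hq i))
  -- the per-unit information matrices
  set E : Fin r → Matrix (Fin p) (Fin p) ℝ := fun i => (A i)⁻¹ + D with hE
  have hEPD : ∀ i, (E i).PosDef := fun i => ((hA i).inv).add_posSemidef hD
  set S : Fin r → Matrix (Fin p) (Fin p) ℝ := fun i => (E i)⁻¹ with hS
  have hSPD : ∀ i, (S i).PosDef := fun i => (hEPD i).inv
  set Ebar : Matrix (Fin p) (Fin p) ℝ := Abar⁻¹ + D with hEbar
  have hEbarPD : Ebar.PosDef := (hAbarPD.inv).add_posSemidef hD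
  set Sbar : Matrix (Fin p) (Fin p) ℝ := Ebar⁻¹ with hSbar
  have hSbarPD : Sbar.PosDef := hEbarPD.inv
  -- the key Loewner inequality, pointwise on quadratic forms
  have key : ∀ x : Fin p → ℝ,
      ∑ i, q i * (x ⬝ᵥ S i *ᵥ x) ≤ x ⬝ᵥ Sbar *ᵥ x := by
    intro x
    set y : Fin r → (Fin p → ℝ) := fun i => S i *ᵥ x with hy
    set ybar : Fin p → ℝ := ∑ i, q i • y i with hybar
    set z : Fin p → ℝ := Abar⁻¹ *ᵥ ybar with hz
    -- E i *ᵥ y i = x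
    have hEiy : ∀ i, E i *ᵥ y i = x := by
      intro i
      rw [hy]
      simp only [Matrix.mulVec_mulVec]
      rw [Matrix.mul_nonsing_inv _ (isUnit_iff_isUnit_det _ |>.1 (hEPD i).isUnit),
        Matrix.one_mulVec]
    -- Abar *ᵥ z = ybar
    have hAz : Abar *ᵥ z = ybar := by
      rw [hz]
      simp only [Matrix.mulVec_mulVec]
      rw [Matrix.mul_nonsing_inv _ (isUnit_iff_isUnit_det _ |>.1 hAbarPD.isUnit),
        Matrix.one_mulVec]
    -- (a) exact value of x ⬝ᵥ S i *ᵥ x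
    have ha : ∀ i, x ⬝ᵥ S i *ᵥ x
        = 2 * (x ⬝ᵥ y i) - (y i ⬝ᵥ (A i)⁻¹ *ᵥ y i) - (y i ⬝ᵥ D *ᵥ y i) := by
      intro i
      have h1 : y i ⬝ᵥ E i *ᵥ y i = x ⬝ᵥ y i := by
        rw [hEiy i, dotProduct_comm]
      have h2 : y i ⬝ᵥ E i *ᵥ y i = y i ⬝ᵥ (A i)⁻¹ *ᵥ y i + y i ⬝ᵥ D *ᵥ y i := by
        rw [hE]
        simp [Matrix.add_mulVec, dotProduct_add]
      have h3 : x ⬝ᵥ S i *ᵥ x = x ⬝ᵥ y i := rfl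
      linarith
    -- (b) lower bound for y i ⬝ᵥ (A i)⁻¹ *ᵥ y i
    have hb : ∀ i, 2 * (y i ⬝ᵥ z) - (z ⬝ᵥ A i *ᵥ z) ≤ y i ⬝ᵥ (A i)⁻¹ *ᵥ y i := by
      intro i
      have hinv : ((A i)⁻¹).PosSemidef := (hA i).inv.posSemidef
      have h := polar hinv (y i) (A i *ᵥ z)
      have h1 : (A i)⁻¹ *ᵥ (A i *ᵥ z) = z := by
        simp only [Matrix.mulVec_mulVec]
        rw [Matrix.nonsing_inv_mul _ (isUnit_iff_isUnit_det _ |>.1 (hA i).isUnit),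
          Matrix.one_mulVec]
      rw [h1] at h
      have h2 : (A i *ᵥ z) ⬝ᵥ z = z ⬝ᵥ A i *ᵥ z := dotProduct_comm _ _
      linarith
    -- (c) lower bound for y i ⬝ᵥ D *ᵥ y i
    have hc : ∀ i, 2 * (y i ⬝ᵥ D *ᵥ ybar) - (ybar ⬝ᵥ D *ᵥ ybar) ≤ y i ⬝ᵥ D *ᵥ y i := by
      intro i
      have h := polar hD (y i) ybar
      linarith
    -- combined per-index bound
    have per : ∀ i ∈ Finset.univ, q i * (x ⬝ᵥ S i *ᵥ x)
        ≤ q i * (2 * (x ⬝ᵥ y i) - (2 * (y i ⬝ᵥ z) - z ⬝ᵥ A i *ᵥ z)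
            - (2 * (y i ⬝ᵥ D *ᵥ ybar) - ybar ⬝ᵥ D *ᵥ ybar)) := by
      intro i _
      refine mul_le_mul_of_nonneg_left ?_ (hq i)
      have := hb i; have := hc i; have := ha i
      linarith
    -- sum identities
    have S5 : ∑ i, q i * (x ⬝ᵥ y i) = x ⬝ᵥ ybar := by
      rw [hybar, dotProduct_sum']
      exact Finset.sum_congr rfl fun i _ => by rw [dotProduct_smul, smul_eq_mul]
    have S1 : ∑ i, q i * (y i ⬝ᵥ z) = ybar ⬝ᵥ z := by
      rw [hybar, sum_dotProduct']
      exact Finset.sum_congr rfl fun i _ => by rw [smul_dotProduct, smul_eq_mul]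
    have S2 : ∑ i, q i * (z ⬝ᵥ A i *ᵥ z) = ybar ⬝ᵥ z := by
      have : z ⬝ᵥ Abar *ᵥ z = ∑ i, q i * (z ⬝ᵥ A i *ᵥ z) := by
        rw [hAbar, sum_mulVec', dotProduct_sum']
        exact Finset.sum_congr rfl fun i _ => by
          rw [Matrix.smul_mulVec, dotProduct_smul, smul_eq_mul]
      rw [← this, hAz, dotProduct_comm]
    have S3 : ∑ i, q i * (y i ⬝ᵥ D *ᵥ ybar) = ybar ⬝ᵥ D *ᵥ ybar := by
      rw [hybar, sum_dotProduct']
      exact Finset.sum_congr rfl fun i _ => by rw [smul_dotProduct, smul_eq_mul]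
    have S4 : ∑ i, q i * (ybar ⬝ᵥ D *ᵥ ybar) = ybar ⬝ᵥ D *ᵥ ybar := by
      rw [← Finset.sum_mul, hqs, one_mul]
    -- final bound: 2(x⬝ybar) - ybar⬝z - ybarDybar ≤ x Sbar x
    have hyz : ybar ⬝ᵥ Abar⁻¹ *ᵥ ybar = ybar ⬝ᵥ z := rfl
    have final : 2 * (x ⬝ᵥ ybar) - ybar ⬝ᵥ z - ybar ⬝ᵥ D *ᵥ ybar ≤ x ⬝ᵥ Sbar *ᵥ x := by
      have h := polar hEbarPD.posSemidef ybar (Sbar *ᵥ x)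
      have h1 : Ebar *ᵥ (Sbar *ᵥ x) = x := by
        rw [hSbar]
        simp only [Matrix.mulVec_mulVec]
        rw [Matrix.mul_nonsing_inv _ (isUnit_iff_isUnit_det _ |>.1 hEbarPD.isUnit),
          Matrix.one_mulVec]
      rw [h1] at h
      have h2 : ybar ⬝ᵥ x = x ⬝ᵥ ybar := dotProduct_comm _ _
      have h3 : (Sbar *ᵥ x) ⬝ᵥ x = x ⬝ᵥ Sbar *ᵥ x := dotProduct_comm _ _
      have h4 : ybar ⬝ᵥ Ebar *ᵥ ybar = ybar ⬝ᵥ z + ybar ⬝ᵥ D *ᵥ ybar := by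
        rw [hEbar, Matrix.add_mulVec, dotProduct_add, hyz]
      linarith
    calc ∑ i, q i * (x ⬝ᵥ S i *ᵥ x)
        ≤ ∑ i, q i * (2 * (x ⬝ᵥ y i) - (2 * (y i ⬝ᵥ z) - z ⬝ᵥ A i *ᵥ z)
            - (2 * (y i ⬝ᵥ D *ᵥ ybar) - ybar ⬝ᵥ D *ᵥ ybar)) := Finset.sum_le_sum per
      _ = 2 * (x ⬝ᵥ ybar) - ybar ⬝ᵥ z - ybar ⬝ᵥ D *ᵥ ybar := by
          have expand : ∀ i ∈ Finset.univ,
              q i * (2 * (x ⬝ᵥ y i) - (2 * (y i ⬝ᵥ z) - z ⬝ᵥ A i *ᵥ z)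
                - (2 * (y i ⬝ᵥ D *ᵥ ybar) - ybar ⬝ᵥ D *ᵥ ybar))
              = 2 * (q i * (x ⬝ᵥ y i)) - 2 * (q i * (y i ⬝ᵥ z)) + q i * (z ⬝ᵥ A i *ᵥ z)
                - 2 * (q i * (y i ⬝ᵥ D *ᵥ ybar)) + q i * (ybar ⬝ᵥ D *ᵥ ybar) := by
            intro i _; ring
          rw [Finset.sum_congr rfl expand]
          simp only [Finset.sum_add_distrib, Finset.sum_sub_distrib, ← Finset.mul_sum]
          rw [S1, S2, S3, S4, S5]
          ring
      _ ≤ x ⬝ᵥ Sbar *ᵥ x := final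
  -- now package the key inequality as a PosSemidef statement and apply hΦ
  have hsumPSD : (∑ i, q i • S i).PosSemidef :=
    psd_sum _ fun i => psd_smul (hSPD i).posSemidef (hq i)
  have hdotsum : ∀ x : Fin p → ℝ,
      x ⬝ᵥ (∑ i, q i • S i) *ᵥ x = ∑ i, q i * (x ⬝ᵥ S i *ᵥ x) := by
    intro x
    rw [sum_mulVec', dotProduct_sum']
    exact Finset.sum_congr rfl fun i _ => by
      rw [Matrix.smul_mulVec, dotProduct_smul, smul_eq_mul]
  have hdiff : (Sbar - ∑ i, q i • S i).PosSemidef := by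
    refine posSemidef_iff_dotProduct_mulVec.2 ⟨hSbarPD.1.sub hsumPSD.1, fun x => ?_⟩
    rw [star_trivial, Matrix.sub_mulVec, dotProduct_sub, hdotsum x]
    have := key x
    linarith
  exact hΦ _ _ hSbarPD.posSemidef hsumPSD hdiff
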